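/- Let 𝒢 = {(A_1, a_1), …, (A_K, a_K)} be a finite set of elements of SA(2,ℤ) such that the subsemigroup ⟨A_1, …, A_K⟩ of SL(2,ℤ) is a group which is infinite cyclic and generated by a twisted inversion A. Then the subsemigroup ⟨𝒢⟩ of SA(2,ℤ) is a group. -/

import Mathlib

open scoped Matrix

abbrev SL2Z := Matrix.SpecialLinearGroup (Fin 2) ℤ

/-- The special affine group `SA(2, ℤ) = ℤ² ⋊ SL(2, ℤ)`, as pairs `(A, a)`. -/
@[ext]
structure SA2 : Type where
  lin : SL2Z
  trans : Fin 2 → ℤ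

namespace SA2

instance : Mul SA2 :=
  ⟨fun p q => ⟨p.lin * q.lin, (p.lin : Matrix (Fin 2) (Fin 2) ℤ) *ᵥ q.trans + p.trans⟩⟩

instance : One SA2 := ⟨⟨1, 0⟩⟩

instance : Inv SA2 :=
  ⟨fun p => ⟨p.lin⁻¹, -(((p.lin⁻¹ : SL2Z) : Matrix (Fin 2) (Fin 2) ℤ) *ᵥ p.trans)⟩⟩

@[simp] lemma mul_lin (p q : SA2) : (p * q).lin = p.lin * q.lin := rfl
@[simp] lemma mul_trans (p q : SA2) :
    (p * q).trans = (p.lin : Matrix (Fin 2) (Fin 2) ℤ) *ᵥ q.trans + p.trans := rfl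
@[simp] lemma one_lin : (1 : SA2).lin = 1 := rfl
@[simp] lemma one_trans : (1 : SA2).trans = 0 := rfl
@[simp] lemma inv_lin (p : SA2) : (p⁻¹).lin = p.lin⁻¹ := rfl
@[simp] lemma inv_trans (p : SA2) :
    (p⁻¹).trans = -(((p.lin⁻¹ : SL2Z) : Matrix (Fin 2) (Fin 2) ℤ) *ᵥ p.trans) := rfl

instance : Group SA2 where
  mul_assoc a b c := by
    ext i
    · rw [mul_lin, mul_lin, mul_lin, mul_lin, mul_assoc]
    · simp only [mul_trans, mul_lin, Matrix.SpecialLinearGroup.coe_mul, Matrix.mulVec_add,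
        Matrix.mulVec_mulVec, add_assoc]
  one_mul a := by
    ext i
    · simp
    · simp
  mul_one a := by
    ext i
    · simp
    · simp [Matrix.mulVec_zero]
  inv_mul_cancel a := by
    ext i
    · simp
    · simp only [mul_trans, inv_lin, inv_trans, add_neg_cancel, one_trans]

end SA2

/-- A subsemigroup `S` of a group is a group if it contains the neutral element and
is closed under inverses. -/
def Subsemigroup.IsSubgroup {G : Type*} [Group G] (S : Subsemigroup G) : Prop :=
  (1 : G) ∈ S ∧ ∀ x ∈ S, x⁻¹ ∈ S

/-- A *twisted inversion*: trace `-2` and not `-I`. -/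
def IsTwistedInversion (A : SL2Z) : Prop :=
  Matrix.trace (A : Matrix (Fin 2) (Fin 2) ℤ) = -2 ∧ (A : Matrix (Fin 2) (Fin 2) ℤ) ≠ -1


private lemma sa2_key1 (M M' : Matrix (Fin 2) (Fin 2) ℤ) (p q : Fin 2 → ℤ)
    (hM' : M' = !![M 1 1, -(M 0 1); -(M 1 0), M 0 0])
    (htr : M 0 0 + M 1 1 = -2)
    (hdet : M 0 0 * M 1 1 - M 0 1 * M 1 0 = 1) :
    M' *ᵥ (M' *ᵥ (M *ᵥ (M *ᵥ ((M *ᵥ q + p) + (M' *ᵥ p + q)) + (M *ᵥ q + p)) + (M *ᵥ q + p))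
        + (M' *ᵥ p + q)) + (M' *ᵥ p + q)
      = -((M *ᵥ q + p) + (M' *ᵥ p + q)) := by
  subst hM'
  funext i
  fin_cases i
  · simp [Matrix.mulVec, dotProduct, Fin.sum_univ_two, Matrix.vecHead, Matrix.vecTail]
    linear_combination ((1)*q 0 + (-2)*p 0 + (2)*M 1 1*p 0 + (-2)*M 0 1*p 1 + (-1)*M 0 1*M 1 0*q 0 + (-1)*M 0 1*M 1 0*p 0 + (1)*M 0 1*M 0 1*M 1 0*M 1 0*p 0 + (-2)*M 0 0*q 0 + (1)*M 0 0*p 0 + (1)*M 0 0*M 1 1*q 0 + (1)*M 0 0*M 1 1*p 0 + (-1)*M 0 0*M 0 1*q 1 + (1)*M 0 0*M 0 1*p 1 + (-2)*M 0 0*M 0 1*M 1 0*q 0 + (1)*M 0 0*M 0 1*M 1 0*p 0 + (-2)*M 0 0*M 0 1*M 1 0*M 1 1*p 0 + (-1)*M 0 0*M 0 1*M 0 1*M 1 0*q 1 + (1)*M 0 0*M 0 1*M 0 1*M 1 0*p 1 + (-1)*M 0 0*M 0 0*q 0 + (1)*M 0 0*M 0 0*p 0 + (2)*M 0 0*M 0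 0*M 1 1*q 0 + (-1)*M 0 0*M 0 0*M 1 1*p 0 + (1)*M 0 0*M 0 0*M 1 1*M 1 1*p 0 + (1)*M 0 0*M 0 0*M 0 1*M 1 1*q 1 + (-1)*M 0 0*M 0 0*M 0 1*M 1 1*p 1 + (-1)*M 0 0*M 0 0*M 0 1*M 1 0*q 0 + (1)*M 0 0*M 0 0*M 0 1*M 1 0*p 0 + (1)*M 0 0*M 0 0*M 0 0*M 1 1*q 0 + (-1)*M 0 0*M 0 0*M 0 0*M 1 1*p 0) * htr + ((-5)*p 0 + (-2)*M 0 1*p 1 + (-2)*M 0 1*M 1 0*q 0 + (1)*M 0 1*M 1 0*p 0 + (-1)*M 0 1*M 0 1*M 1 0*q 1 + (1)*M 0 1*M 0 1*M 1 0*p 1 + (-4)*M 0 0*q 0 + (-2)*M 0 0*M 0 1*q 1 + (2)*M 0 0*M 0 1*p 1 + (-1)*M 0 0*M 0 1*M 1 0*q 0 + (1)*M 0 0*M 0 1*M 1 0*p 0 + (-4)*M 0 0*M 0 0*q 0 + (3)*M 0 0*M 0 0*p 0 + (-1)*M 0 0*M 0 0*M 0 1*q 1 + (1)*M 0 0*M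 0 0*M 0 1*p 1 + (-1)*M 0 0*M 0 0*M 0 0*q 0 + (1)*M 0 0*M 0 0*M 0 0*p 0) * hdet
  · simp [Matrix.mulVec, dotProduct, Fin.sum_univ_two, Matrix.vecHead, Matrix.vecTail]
    linear_combination ((1)*q 1 + (-2)*M 1 0*p 0 + (1)*M 0 1*M 0 1*M 1 0*M 1 0*q 1 + (1)*M 0 0*p 1 + (-1)*M 0 0*M 1 0*q 0 + (1)*M 0 0*M 1 0*p 0 + (-1)*M 0 0*M 0 1*M 1 0*p 1 + (-2)*M 0 0*M 0 1*M 1 0*M 1 1*q 1 + (-1)*M 0 0*M 0 1*M 1 0*M 1 0*q 0 + (1)*M 0 0*M 0 1*M 1 0*M 1 0*p 0 + (1)*M 0 0*M 0 0*q 1 + (-1)*M 0 0*M 0 0*p 1 + (1)*M 0 0*M 0 0*M 1 1*p 1 + (1)*M 0 0*M 0 0*M 1 1*M 1 1*q 1 + (1)*M 0 0*M 0 0*M 1 0*M 1 1*q 0 + (-1)*M 0 0*M 0 0*M 1 0*M 1 1*p 0 + (1)*M 0 0*M 0 0*M 0 1*M 1 0*q 1 + (-1)*M 0 0*M 0 0*M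 0 1*M 1 0*p 1 + (-1)*M 0 0*M 0 0*M 0 0*M 1 1*q 1 + (1)*M 0 0*M 0 0*M 0 0*M 1 1*p 1) * htr + ((-1)*p 1 + (-2)*M 1 0*p 0 + (-1)*M 0 1*M 1 0*p 1 + (-1)*M 0 1*M 1 0*M 1 0*q 0 + (1)*M 0 1*M 1 0*M 1 0*p 0 + (-2)*M 0 0*M 1 0*q 0 + (2)*M 0 0*M 1 0*p 0 + (1)*M 0 0*M 0 1*M 1 0*q 1 + (-1)*M 0 0*M 0 1*M 1 0*p 1 + (2)*M 0 0*M 0 0*q 1 + (-3)*M 0 0*M 0 0*p 1 + (-1)*M 0 0*M 0 0*M 1 0*q 0 + (1)*M 0 0*M 0 0*M 1 0*p 0 + (1)*M 0 0*M 0 0*M 0 0*q 1 + (-1)*M 0 0*M 0 0*M 0 0*p 1) * hdet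

private lemma sa2_key2 (M M' : Matrix (Fin 2) (Fin 2) ℤ) (v p q : Fin 2 → ℤ)
    (hM' : M' = !![M 1 1, -(M 0 1); -(M 1 0), M 0 0])
    (htr : M 0 0 + M 1 1 = -2) :
    ((M *ᵥ v + (M *ᵥ q + p)) + (M' *ᵥ v + (M' *ᵥ p + q)))
        + (v + -((M *ᵥ q + p) + (M' *ᵥ p + q))) = -v := by
  subst hM'
  funext i
  fin_cases i
  · simp [Matrix.mulVec, dotProduct, Fin.sum_univ_two, Matrix.vecHead, Matrix.vecTail]
    linear_combination (v 0) * htr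
  · simp [Matrix.mulVec, dotProduct, Fin.sum_univ_two, Matrix.vecHead, Matrix.vecTail]
    linear_combination (v 1) * htr

/-- If the subsemigroup `⟨A_1, …, A_K⟩` of `SL(2,ℤ)` is a group which
is infinite cyclic generated by a twisted inversion `A`, then the subsemigroup of
`SA(2,ℤ)` generated by `𝒢 = {(A_1,a_1), …, (A_K,a_K)}` is a group. -/
theorem sa2_closure_isGroup_of_twisted_inversion_generator
    (K : ℕ) (hK : 0 < K) (Afam : Fin K → SL2Z) (a : Fin K → Fin 2 → ℤ) (A : SL2Z)
    (hgrp : (Subsemigroup.closure (Set.range Afam)).IsSubgroup)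
    (hgen : (Subsemigroup.closure (Set.range Afam) : Set SL2Z)
        = (Subgroup.zpowers A : Set SL2Z))
    (hinf : Function.Injective fun n : ℤ => A ^ n)
    (hA : IsTwistedInversion A) :
    (Subsemigroup.closure (Set.range fun i => SA2.mk (Afam i) (a i))).IsSubgroup := by
  classical
  set 𝒜 : Set SL2Z := Set.range Afam with h𝒜
  set S : Subsemigroup SA2 :=
    Subsemigroup.closure (Set.range fun i => SA2.mk (Afam i) (a i)) with hS
  -- lifting linear parts to the affine semigroup
  have lift : ∀ B ∈ Subsemigroup.closure 𝒜, ∃ t, SA2.mk B t ∈ S := by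
    intro B hB
    induction hB using Subsemigroup.closure_induction with
    | mem x hx =>
      obtain ⟨i, rfl⟩ := hx
      exact ⟨a i, Subsemigroup.subset_closure ⟨i, rfl⟩⟩
    | mul x y hx hy ihx ihy =>
      obtain ⟨t, ht⟩ := ihx
      obtain ⟨u, hu⟩ := ihy
      exact ⟨(x : Matrix (Fin 2) (Fin 2) ℤ) *ᵥ u + t, mul_mem ht hu⟩
  -- projecting to linear parts
  have proj : ∀ x ∈ S, SA2.lin x ∈ Subsemigroup.closure 𝒜 := by
    intro x hx
    induction hx using Subsemigroup.closure_induction with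
    | mem x hx =>
      obtain ⟨i, rfl⟩ := hx
      exact Subsemigroup.subset_closure ⟨i, rfl⟩
    | mul x y hx hy ihx ihy =>
      rw [SA2.mul_lin]
      exact mul_mem ihx ihy
  have hAmem : A ∈ Subsemigroup.closure 𝒜 := by
    have : A ∈ (Subsemigroup.closure 𝒜 : Set SL2Z) := by
      rw [hgen]; exact Subgroup.mem_zpowers A
    exact this
  have hAinv : A⁻¹ ∈ Subsemigroup.closure 𝒜 := hgrp.2 A hAmem
  obtain ⟨p, hp⟩ := lift A hAmem
  obtain ⟨q, hq⟩ := lift A⁻¹ hAinv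
  set M : Matrix (Fin 2) (Fin 2) ℤ := (A : Matrix (Fin 2) (Fin 2) ℤ) with hM
  set M' : Matrix (Fin 2) (Fin 2) ℤ := ((A⁻¹ : SL2Z) : Matrix (Fin 2) (Fin 2) ℤ) with hMi
  have hM'adj : M' = !![M 1 1, -(M 0 1); -(M 1 0), M 0 0] := by
    rw [hMi, Matrix.SpecialLinearGroup.coe_inv, Matrix.adjugate_fin_two]
  have htr : M 0 0 + M 1 1 = -2 := by
    have := hA.1
    rwa [Matrix.trace_fin_two] at this
  have hdet : M 0 0 * M 1 1 - M 0 1 * M 1 0 = 1 := by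
    have := A.property
    rwa [Matrix.det_fin_two] at this
  set c₁ : Fin 2 → ℤ := M *ᵥ q + p with hc₁def
  set c₂ : Fin 2 → ℤ := M' *ᵥ p + q with hc₂def
  -- basic word operations
  have Lf : ∀ v : Fin 2 → ℤ, SA2.mk 1 v ∈ S → SA2.mk 1 (M *ᵥ v + c₁) ∈ S := by
    intro v hv
    have h := mul_mem (mul_mem hp hv) hq
    have e : SA2.mk A p * SA2.mk 1 v * SA2.mk A⁻¹ q = SA2.mk 1 (M *ᵥ v + c₁) := by
      ext i
      · simp
      · simp [hc₁def, Matrix.mulVec_add, ← hM, ← hMi]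
        fin_cases i <;> simp [Matrix.vecHead, Matrix.vecTail] <;> ring
    rwa [e] at h
  have Lg : ∀ v : Fin 2 → ℤ, SA2.mk 1 v ∈ S → SA2.mk 1 (M' *ᵥ v + c₂) ∈ S := by
    intro v hv
    have h := mul_mem (mul_mem hq hv) hp
    have e : SA2.mk A⁻¹ q * SA2.mk 1 v * SA2.mk A p = SA2.mk 1 (M' *ᵥ v + c₂) := by
      ext i
      · simp
      · simp [hc₂def, Matrix.mulVec_add, ← hM, ← hMi]
        fin_cases i <;> simp [Matrix.vecHead, Matrix.vecTail] <;> ring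
    rwa [e] at h
  have Ladd : ∀ v w : Fin 2 → ℤ, SA2.mk 1 v ∈ S → SA2.mk 1 w ∈ S →
      SA2.mk 1 (v + w) ∈ S := by
    intro v w hv hw
    have h := mul_mem hv hw
    have e : SA2.mk 1 v * SA2.mk 1 w = SA2.mk 1 (v + w) := by
      ext i
      · simp
      · simp [Matrix.one_mulVec]
        abel
    rwa [e] at h
  have hc₁ : SA2.mk 1 c₁ ∈ S := by
    have h := mul_mem hp hq
    have e : SA2.mk A p * SA2.mk A⁻¹ q = SA2.mk 1 c₁ := by
      ext i
      · simp
      · simp [hc₁def, ← hM]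
        fin_cases i <;> simp [Matrix.vecHead, Matrix.vecTail] <;> ring
    rwa [e] at h
  have hc₂ : SA2.mk 1 c₂ ∈ S := by
    have h := mul_mem hq hp
    have e : SA2.mk A⁻¹ q * SA2.mk A p = SA2.mk 1 c₂ := by
      ext i
      · simp
      · simp [hc₂def, ← hMi]
        fin_cases i <;> simp [Matrix.vecHead, Matrix.vecTail] <;> ring
    rwa [e] at h
  have hc₁₂ : SA2.mk 1 (c₁ + c₂) ∈ S := Ladd _ _ hc₁ hc₂
  -- the negative of c₁ + c₂ lies in S
  have hmD : SA2.mk 1 (-(c₁ + c₂)) ∈ S := by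
    have h := Lg _ (Lg _ (Lf _ (Lf _ hc₁₂)))
    rwa [hc₁def, hc₂def, sa2_key1 M M' p q hM'adj htr hdet] at h
  -- S is closed under negation of pure translations
  have hneg : ∀ v : Fin 2 → ℤ, SA2.mk 1 v ∈ S → SA2.mk 1 (-v) ∈ S := by
    intro v hv
    have h := Ladd _ _ (Ladd _ _ (Lf _ hv) (Lg _ hv)) (Ladd _ _ hv hmD)
    rwa [hc₁def, hc₂def, sa2_key2 M M' v p q hM'adj htr] at h
  have hone : (1 : SA2) ∈ S := by
    have h := Ladd _ _ hc₁₂ hmD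
    have e : SA2.mk 1 ((c₁ + c₂) + -(c₁ + c₂)) = 1 := by
      ext i
      · rfl
      · simp
    rwa [e] at h
  refine ⟨hone, ?_⟩
  intro x hx
  obtain ⟨u, hu⟩ := lift (SA2.lin x)⁻¹ (hgrp.2 _ (proj x hx))
  have hw : x * SA2.mk (SA2.lin x)⁻¹ u = SA2.mk 1 ((SA2.lin x : Matrix (Fin 2) (Fin 2) ℤ) *ᵥ u + SA2.trans x) := by
    ext i
    · simp
    · rfl
  have h5 := hneg _ (hw ▸ mul_mem hx hu)
  have e : x⁻¹ = SA2.mk (SA2.lin x)⁻¹ u *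
      SA2.mk 1 (-((SA2.lin x : Matrix (Fin 2) (Fin 2) ℤ) *ᵥ u + SA2.trans x)) := by
    ext i
    · simp
    · have h1 : ((SA2.lin x : Matrix (Fin 2) (Fin 2) ℤ)).adjugate
          * (SA2.lin x : Matrix (Fin 2) (Fin 2) ℤ) = 1 := by
        rw [Matrix.adjugate_mul, (SA2.lin x).prop, one_smul]
      simp only [SA2.inv_trans, SA2.mul_trans, SA2.inv_lin, Matrix.SpecialLinearGroup.coe_inv,
        Matrix.mulVec_add, Matrix.mulVec_neg, Matrix.mulVec_mulVec, h1, Matrix.one_mulVec, Pi.add_apply, Pi.neg_apply]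
      abel
  rw [e]
  exact mul_mem hu h5
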